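/- arXiv:quant-ph/0105090 — 3 statements merged into one kernel-verified Lean document; each statement's English description precedes it below -/
import Mathlib

section
/- Let ρ₁ = Tr₂(|ψ⟩⟨ψ|) be the partial trace over the second factor of a pure state ψ ∈ ℂ^{N₁} ⊗ ℂ^{N₂}, and suppose ρ₁ is positive definite. Then with X = |det(ρ₁)|^{1/(2N₁)} (√ρ₁)^{-1}, the state ψ' = (X ⊗ I)ψ satisfies Tr(|ψ'⟩⟨ψ'|) = N₁ det(ρ₁)^{1/N₁} ≤ Tr(|ψ⟩⟨ψ|), with equality iff ρ₁ is proportional to the identity. -/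
open Matrix ComplexOrder

/-- The partial trace over the second factor of `|ψ⟩⟨ψ|` for
`ψ ∈ ℂ^{N₁} ⊗ ℂ^{N₂}`, viewing `ψ` as an `N₁ × N₂` matrix of coefficients:
`(Tr₂ |ψ⟩⟨ψ|)_{i i'} = Σ_j ψ_{ij} conj ψ_{i'j}`. -/
noncomputable def ptrace₂ {N₁ N₂ : ℕ} (ψ : Matrix (Fin N₁) (Fin N₂) ℂ) :
    Matrix (Fin N₁) (Fin N₁) ℂ :=
  ψ * ψᴴ

/-- The square root of a positive semidefinite matrix, as Mathlib (Dec 2024) defined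
`Matrix.PosSemidef.sqrt` (removed since). -/
noncomputable def Matrix.PosSemidef.sqrt {n : Type*} [Fintype n] [DecidableEq n]
    {A : Matrix n n ℂ} (hA : A.PosSemidef) : Matrix n n ℂ :=
  (hA.1.eigenvectorUnitary : Matrix n n ℂ) * diagonal ((↑) ∘ Real.sqrt ∘ hA.1.eigenvalues) *
    (star (hA.1.eigenvectorUnitary : Matrix n n ℂ))

lemma aux_sqrt_herm {n : Type*} [Fintype n] [DecidableEq n] {A : Matrix n n ℂ}
    (hA : A.PosSemidef) : (Matrix.PosSemidef.sqrt hA).IsHermitian := by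
  unfold Matrix.PosSemidef.sqrt
  simp [Matrix.IsHermitian, Matrix.conjTranspose_mul, Matrix.mul_assoc, Matrix.star_eq_conjTranspose,
    Function.comp_def, Pi.star_def, Complex.star_def]

lemma aux_sqrt_mul_self {n : Type*} [Fintype n] [DecidableEq n] {A : Matrix n n ℂ}
    (hA : A.PosSemidef) : Matrix.PosSemidef.sqrt hA * Matrix.PosSemidef.sqrt hA = A := by
  unfold Matrix.PosSemidef.sqrt
  set U : Matrix n n ℂ := (hA.1.eigenvectorUnitary : Matrix n n ℂ) with hUdef
  set D : Matrix n n ℂ := diagonal ((↑) ∘ Real.sqrt ∘ hA.1.eigenvalues) with hDdef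
  have hU : star U * U = 1 := Matrix.mem_unitaryGroup_iff'.mp (hA.1.eigenvectorUnitary).2
  have hD : D * D = diagonal (RCLike.ofReal ∘ hA.1.eigenvalues) := by
    rw [hDdef, diagonal_mul_diagonal]; congr 1; funext i
    simp only [Function.comp_apply]
    rw [← Complex.ofReal_mul, Real.mul_self_sqrt (hA.eigenvalues_nonneg i)]; rfl
  rw [show U * D * star U * (U * D * star U) = U * (D * (star U * U) * D) * star U by
    simp only [Matrix.mul_assoc], hU, Matrix.mul_one, hD]
  conv_rhs => rw [hA.1.spectral_theorem, Unitary.conjStarAlgAut_apply]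

/-- trace = sum of eigenvalues for a Hermitian complex matrix -/
lemma aux_trace_eq_sum_eigen {n : ℕ} {A : Matrix (Fin n) (Fin n) ℂ} (hA : A.IsHermitian) :
    A.trace = ∑ i, (hA.eigenvalues i : ℂ) := by
  conv_lhs => rw [hA.spectral_theorem, Unitary.conjStarAlgAut_apply]
  rw [Matrix.trace_mul_cycle, Matrix.mem_unitaryGroup_iff'.mp (hA.eigenvectorUnitary).2,
    one_mul, Matrix.trace_diagonal]
  rfl

/-- if `ρ₁ = Tr₂ |ψ⟩⟨ψ|` is positive definite and
`X = |det ρ₁|^(1/(2N₁)) • (√ρ₁)⁻¹`, then `ψ' = (X ⊗ I) ψ` satisfies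
`Tr |ψ'⟩⟨ψ'| = N₁ det(ρ₁)^(1/N₁) ≤ Tr |ψ⟩⟨ψ|`, with equality iff `ρ₁ ∝ I`. -/
theorem filter_decreases_trace (N₁ N₂ : ℕ) (hN₁ : 0 < N₁)
    (ψ : Matrix (Fin N₁) (Fin N₂) ℂ) (hρ : (ptrace₂ ψ).PosDef) :
    -- `ψ' = X * ψ`, and `Tr |ψ'⟩⟨ψ'| = Tr (ψ' ψ'ᴴ)`
    (∀ X : Matrix (Fin N₁) (Fin N₁) ℂ,
      X = ((‖(ptrace₂ ψ).det‖) ^ ((1 : ℝ) / (2 * N₁)) : ℝ) •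
            (Matrix.PosSemidef.sqrt hρ.posSemidef)⁻¹ →
      ((X * ψ) * (X * ψ)ᴴ).trace.re = (N₁ : ℝ) * (ptrace₂ ψ).det.re ^ ((1 : ℝ) / N₁)) ∧
    (N₁ : ℝ) * (ptrace₂ ψ).det.re ^ ((1 : ℝ) / N₁) ≤ (ψ * ψᴴ).trace.re ∧
    ((N₁ : ℝ) * (ptrace₂ ψ).det.re ^ ((1 : ℝ) / N₁) = (ψ * ψᴴ).trace.re ↔
      ∃ c : ℝ, ptrace₂ ψ = (c : ℂ) • (1 : Matrix (Fin N₁) (Fin N₁) ℂ)) := by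
  classical
  have hρψ : ptrace₂ ψ = ψ * ψᴴ := rfl
  set ρ : Matrix (Fin N₁) (Fin N₁) ℂ := ptrace₂ ψ with hρdef
  have hherm : ρ.IsHermitian := hρ.1
  set lam : Fin N₁ → ℝ := hherm.eigenvalues with hlam
  have hlampos : ∀ i, 0 < lam i := hρ.eigenvalues_pos
  have hNpos : (0 : ℝ) < (N₁ : ℝ) := by exact_mod_cast hN₁
  have hNne : (N₁ : ℝ) ≠ 0 := hNpos.ne'
  have hdet : ρ.det = ((∏ i, lam i : ℝ) : ℂ) := by
    rw [hherm.det_eq_prod_eigenvalues]; push_cast; rfl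
  have hprodpos : (0 : ℝ) < ∏ i, lam i := Finset.prod_pos fun i _ => hlampos i
  have hdet_re : ρ.det.re = ∏ i, lam i := by rw [hdet, Complex.ofReal_re]
  have htr : ρ.trace.re = ∑ i, lam i := by
    rw [aux_trace_eq_sum_eigen hherm]
    rw [Complex.re_sum]
    simp
    rfl
  have hsumpos : (0 : ℝ) < ∑ i, lam i :=
    Finset.sum_pos (fun i _ => hlampos i) (by simp [Finset.univ_nonempty_iff, Fin.pos_iff_nonempty.mp hN₁])
  -- Part 1
  have part1 : ∀ X : Matrix (Fin N₁) (Fin N₁) ℂ,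
      X = ((‖ρ.det‖) ^ ((1 : ℝ) / (2 * N₁)) : ℝ) • (Matrix.PosSemidef.sqrt hρ.posSemidef)⁻¹ →
      ((X * ψ) * (X * ψ)ᴴ).trace.re = (N₁ : ℝ) * ρ.det.re ^ ((1 : ℝ) / N₁) := by
    intro X hX
    set d : ℝ := (‖ρ.det‖) ^ ((1 : ℝ) / (2 * N₁)) with hd
    set S : Matrix (Fin N₁) (Fin N₁) ℂ := Matrix.PosSemidef.sqrt hρ.posSemidef with hS
    have hSherm : S.IsHermitian := aux_sqrt_herm hρ.posSemidef
    have hSS : S * S = ρ := aux_sqrt_mul_self hρ.posSemidef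
    have hdetS : IsUnit S.det := by
      rw [isUnit_iff_ne_zero]
      intro h
      have h2 : S.det * S.det = ρ.det := by rw [← Matrix.det_mul, hSS]
      rw [h, mul_zero] at h2
      exact hρ.det_pos.ne' h2.symm
    have hXH : Xᴴ = X := by
      rw [hX, Matrix.conjTranspose_smul, Matrix.conjTranspose_nonsing_inv, hSherm.eq]
      congr 1
    have key : (X * ψ) * (X * ψ)ᴴ = (d ^ 2 : ℝ) • (1 : Matrix (Fin N₁) (Fin N₁) ℂ) := by
      have h0 : (X * ψ) * (X * ψ)ᴴ = X * ρ * X := by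
        rw [Matrix.conjTranspose_mul, ← Matrix.mul_assoc, hρψ, hXH]
        simp only [Matrix.mul_assoc]
      have h1 : S⁻¹ * (S * S) * S⁻¹ = 1 := by
        rw [← Matrix.mul_assoc, Matrix.nonsing_inv_mul S hdetS, one_mul,
          Matrix.mul_nonsing_inv S hdetS]
      have h2 : (d • S⁻¹) * ρ * (d • S⁻¹) = (d * d) • (S⁻¹ * ρ * S⁻¹) := by
        simp only [Matrix.smul_mul, Matrix.mul_smul, smul_smul]
      rw [h0, hX, h2, ← hSS, h1, sq]
    rw [key, Matrix.trace_smul, Matrix.trace_one]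
    have habs : ‖ρ.det‖ = ∏ i, lam i := by
      rw [hdet, Complex.norm_real, Real.norm_eq_abs, abs_of_pos hprodpos]
    have hd2 : d ^ 2 = (∏ i, lam i) ^ ((1 : ℝ) / N₁) := by
      rw [hd, habs, sq, ← Real.rpow_add hprodpos]
      congr 1
      rw [← add_div, div_eq_div_iff (by positivity) hNne]
      ring
    simp only [Fintype.card_fin, Complex.real_smul, Complex.mul_re, Complex.ofReal_re,
      Complex.ofReal_im, Complex.natCast_re, Complex.natCast_im, mul_zero, zero_mul, sub_zero]
    rw [hd2, hdet_re]
    ring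
  -- AM-GM
  have hamgm : ∏ i, lam i ^ ((1 : ℝ) / N₁) ≤ ∑ i, ((1 : ℝ) / N₁) * lam i :=
    Real.geom_mean_le_arith_mean_weighted Finset.univ (fun _ => (1 : ℝ) / N₁) lam
      (fun i _ => by positivity)
      (by simp [Finset.sum_const, Finset.card_univ, hNne])
      (fun i _ => (hlampos i).le)
  have hprod_rpow : ∏ i, lam i ^ ((1 : ℝ) / N₁) = (∏ i, lam i) ^ ((1 : ℝ) / N₁) :=
    Real.finset_prod_rpow Finset.univ lam (fun i _ => (hlampos i).le) _
  have hsum' : ∑ i, ((1 : ℝ) / N₁) * lam i = (∑ i, lam i) / N₁ := by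
    rw [← Finset.mul_sum]; ring
  have hle : (N₁ : ℝ) * ρ.det.re ^ ((1 : ℝ) / N₁) ≤ (ψ * ψᴴ).trace.re := by
    rw [← hρψ, htr, hdet_re]
    rw [hprod_rpow, hsum'] at hamgm
    calc (N₁ : ℝ) * (∏ i, lam i) ^ ((1 : ℝ) / N₁)
        ≤ (N₁ : ℝ) * ((∑ i, lam i) / N₁) := by
          exact mul_le_mul_of_nonneg_left hamgm hNpos.le
      _ = ∑ i, lam i := by field_simp
  refine ⟨part1, hle, ?_, ?_⟩
  · -- equality ⇒ ρ ∝ 1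
    intro heq
    rw [← hρψ, htr, hdet_re] at heq
    -- equality in AM-GM
    have heq2 : ∑ i, ((1 : ℝ) / N₁) * lam i = ∏ i, lam i ^ ((1 : ℝ) / N₁) := by
      rw [hprod_rpow, hsum']
      field_simp at heq ⊢
      linarith [heq]
    have hexp : ∏ i, lam i ^ ((1 : ℝ) / N₁)
        = Real.exp (∑ i, ((1 : ℝ) / N₁) • Real.log (lam i)) := by
      rw [Real.exp_sum]
      refine Finset.prod_congr rfl fun i _ => ?_
      rw [smul_eq_mul, Real.rpow_def_of_pos (hlampos i), mul_comm]
    have hsle : ∑ i, ((1 : ℝ) / N₁) • Real.exp (Real.log (lam i))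
        ≤ Real.exp (∑ i, ((1 : ℝ) / N₁) • Real.log (lam i)) := by
      rw [← hexp]
      have hss : ∑ i, ((1 : ℝ) / N₁) • Real.exp (Real.log (lam i))
          = ∏ i, lam i ^ ((1 : ℝ) / N₁) := by
        rw [← heq2]
        refine Finset.sum_congr rfl fun i _ => ?_
        rw [smul_eq_mul, Real.exp_log (hlampos i)]
      exact hss.le
    have hPall := strictConvexOn_exp.eq_of_le_map_sum
      (t := Finset.univ) (w := fun _ => (1 : ℝ) / N₁) (p := fun i => Real.log (lam i))
      (fun i _ => by positivity)
      (by simp [Finset.sum_const, Finset.card_univ, hNne])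
      (fun i _ => Set.mem_univ _) hsle
    have i₀ : Fin N₁ := ⟨0, hN₁⟩
    have hall : ∀ i, lam i = lam i₀ := by
      intro i
      have := hPall (Finset.mem_univ i) (Finset.mem_univ i₀)
      calc lam i = Real.exp (Real.log (lam i)) := (Real.exp_log (hlampos i)).symm
        _ = Real.exp (Real.log (lam i₀)) := by rw [this]
        _ = lam i₀ := Real.exp_log (hlampos i₀)
    refine ⟨lam i₀, ?_⟩
    have hdiag : Matrix.diagonal (RCLike.ofReal ∘ lam : Fin N₁ → ℂ)
        = ((lam i₀ : ℝ) : ℂ) • (1 : Matrix (Fin N₁) (Fin N₁) ℂ) := by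
      have : (RCLike.ofReal ∘ lam : Fin N₁ → ℂ) = fun _ => ((lam i₀ : ℝ) : ℂ) := by
        funext i
        simp [hall i]
      rw [this]
      ext i j
      rw [Matrix.diagonal_apply, Matrix.smul_apply, Matrix.one_apply]
      split <;> simp
    calc ρ = (hherm.eigenvectorUnitary : Matrix (Fin N₁) (Fin N₁) ℂ)
            * Matrix.diagonal (RCLike.ofReal ∘ lam)
            * star (hherm.eigenvectorUnitary : Matrix (Fin N₁) (Fin N₁) ℂ) :=
          hherm.spectral_theorem
      _ = ((lam i₀ : ℝ) : ℂ) • ((hherm.eigenvectorUnitary : Matrix (Fin N₁) (Fin N₁) ℂ)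
            * star (hherm.eigenvectorUnitary : Matrix (Fin N₁) (Fin N₁) ℂ)) := by
          rw [hdiag, Matrix.mul_smul, Matrix.mul_one, Matrix.smul_mul]
      _ = ((lam i₀ : ℝ) : ℂ) • (1 : Matrix (Fin N₁) (Fin N₁) ℂ) := by
          rw [Matrix.mem_unitaryGroup_iff.mp (hherm.eigenvectorUnitary).2]
  · -- ρ ∝ 1 ⇒ equality
    rintro ⟨c, hc⟩
    rw [← hρdef] at hc
    rw [← hρψ]
    have htrc : ρ.trace.re = c * N₁ := by
      rw [hc, Matrix.trace_smul, Matrix.trace_one, smul_eq_mul]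
      simp
    have hcpos : 0 < c := by
      have : c * N₁ = ∑ i, lam i := by rw [← htrc, htr]
      nlinarith [hsumpos, hNpos]
    have hdetc : ρ.det.re = c ^ N₁ := by
      rw [hc, Matrix.det_smul, Matrix.det_one, mul_one]
      rw [Fintype.card_fin, ← Complex.ofReal_pow, Complex.ofReal_re]
    rw [htrc, hdetc]
    rw [← Real.rpow_natCast c N₁, ← Real.rpow_mul hcpos.le]
    rw [mul_one_div, div_self hNne, Real.rpow_one]
    ring
end

section
/- The norm of A_t^{⊗3}|W⟩, where A_t = diag(1/t, t) and |W⟩ = |001⟩+|010⟩+|100⟩, equals √3/t, so the infimum over determinant-1 local operations of the norm of the transformed W-state is 0, but this infimum is not attained by any finite operators. -/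
open Matrix

/-- Action of `A ⊗ B ⊗ C` on a three-qubit state given by its coefficients. -/
noncomputable def act3 (A B C : Matrix (Fin 2) (Fin 2) ℂ)
    (ψ : Fin 2 × Fin 2 × Fin 2 → ℂ) : Fin 2 × Fin 2 × Fin 2 → ℂ :=
  fun x => ∑ i, ∑ j, ∑ k, A x.1 i * B x.2.1 j * C x.2.2 k * ψ (i, j, k)

/-- The standard Hermitian norm of a three-qubit coefficient vector. -/
noncomputable def vnorm (ψ : Fin 2 × Fin 2 × Fin 2 → ℂ) : ℝ :=
  Real.sqrt (∑ x, ‖ψ x‖ ^ 2)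

/-- The (unnormalized) W-state `|001⟩ + |010⟩ + |100⟩`. -/
noncomputable def Wstate : Fin 2 × Fin 2 × Fin 2 → ℂ :=
  fun x => if x = (0, 0, 1) ∨ x = (0, 1, 0) ∨ x = (1, 0, 0) then 1 else 0

/-- The local filter `A_t = diag(1/t, t)`. -/
noncomputable def Afilter (t : ℝ) : Matrix (Fin 2) (Fin 2) ℂ :=
  Matrix.diagonal ![(1 : ℂ) / t, (t : ℂ)]

lemma act3_expand (A B C : Matrix (Fin 2) (Fin 2) ℂ) (x : Fin 2 × Fin 2 × Fin 2) :
    act3 A B C Wstate x =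
      A x.1 0 * B x.2.1 0 * C x.2.2 1 + A x.1 0 * B x.2.1 1 * C x.2.2 0
        + A x.1 1 * B x.2.1 0 * C x.2.2 0 := by
  simp [act3, Wstate, Fin.sum_univ_two, Prod.ext_iff]

lemma act3_diag (t : ℝ) (ht : t ≠ 0) :
    act3 (Afilter t) (Afilter t) (Afilter t) Wstate = fun x => (1 / t : ℂ) * Wstate x := by
  funext x
  obtain ⟨i, j, k⟩ := x
  have ht' : (t : ℂ) ≠ 0 := by exact_mod_cast ht
  fin_cases i <;> fin_cases j <;> fin_cases k <;>
    simp [act3, Afilter, Wstate, Fin.sum_univ_two, Matrix.diagonal, Prod.ext_iff] <;>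
    field_simp

lemma vnorm_scaled (t : ℝ) (ht : 0 < t) :
    vnorm (fun x => (1 / t : ℂ) * Wstate x) = Real.sqrt 3 / t := by
  have ht' : t ≠ 0 := ne_of_gt ht
  have : (∑ x : Fin 2 × Fin 2 × Fin 2, ‖(1 / t : ℂ) * Wstate x‖ ^ 2)
      = 3 * (1 / t) ^ 2 := by
    simp [Wstate, Fintype.sum_prod_type, Fin.sum_univ_two, Prod.ext_iff, _root_.map_mul,
      mul_pow, Complex.norm_real, abs_of_pos ht]
    ring
  rw [vnorm, this, Real.sqrt_mul (by norm_num), Real.sqrt_sq (by positivity)]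
  field_simp

lemma vnorm_zero_iff (ψ : Fin 2 × Fin 2 × Fin 2 → ℂ) (h : vnorm ψ = 0) :
    ∀ x, ψ x = 0 := by
  intro x
  have hsum : (∑ y : Fin 2 × Fin 2 × Fin 2, ‖ψ y‖ ^ 2) = 0 := by
    have := Real.sqrt_eq_zero (Finset.sum_nonneg fun y _ => sq_nonneg _) |>.mp h
    exact this
  have := (Finset.sum_eq_zero_iff_of_nonneg (fun y _ => sq_nonneg (‖ψ y‖))).mp
    hsum x (Finset.mem_univ x)
  have h2 : ‖ψ x‖ = 0 := by nlinarith [norm_nonneg (ψ x)]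
  exact norm_eq_zero.mp h2

lemma no_zero (A B C : Matrix (Fin 2) (Fin 2) ℂ) (hA : A.det = 1) (hB : B.det = 1)
    (hC : C.det = 1) : vnorm (act3 A B C Wstate) ≠ 0 := by
  intro h
  have hz := vnorm_zero_iff _ h
  have heq : ∀ i j k : Fin 2,
      A i 0 * B j 0 * C k 1 + A i 0 * B j 1 * C k 0 + A i 1 * B j 0 * C k 0 = 0 := by
    intro i j k
    have := hz (i, j, k)
    rwa [act3_expand] at this
  have hA' : A 0 0 * A 1 1 - A 0 1 * A 1 0 = 1 := by rwa [Matrix.det_fin_two] at hA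
  have hB' : B 0 0 * B 1 1 - B 0 1 * B 1 0 = 1 := by rwa [Matrix.det_fin_two] at hB
  have hC' : C 0 0 * C 1 1 - C 0 1 * C 1 0 = 1 := by rwa [Matrix.det_fin_two] at hC
  -- column 0 of B is nonzero
  obtain ⟨j0, hj0⟩ : ∃ j0 : Fin 2, B j0 0 ≠ 0 := by
    by_contra hcon
    push_neg at hcon
    rw [hcon 0, hcon 1] at hB'
    simp at hB'
  obtain ⟨k0, hk0⟩ : ∃ k0 : Fin 2, C k0 0 ≠ 0 := by
    by_contra hcon
    push_neg at hcon
    rw [hcon 0, hcon 1] at hC'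
    simp at hC'
  have hγ : B j0 0 * C k0 0 ≠ 0 := mul_ne_zero hj0 hk0
  have key : B j0 0 * C k0 0 * (A 0 0 * A 1 1 - A 0 1 * A 1 0) = 0 := by
    linear_combination A 0 0 * heq 1 j0 k0 - A 1 0 * heq 0 j0 k0
  rw [hA'] at key
  exact hγ (by simpa using key)

/-- `‖A_t^{⊗3}|W⟩‖ = √3 / t`, the infimum over determinant-1 local
operations of the norm of the transformed W-state is `0`, but this infimum is not
attained by any (finite) operators. -/
theorem W_infimum_not_attained :
    (∀ t : ℝ, 0 < t → vnorm (act3 (Afilter t) (Afilter t) (Afilter t) Wstate)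
        = Real.sqrt 3 / t) ∧
    sInf {r : ℝ | ∃ A B C : Matrix (Fin 2) (Fin 2) ℂ,
        A.det = 1 ∧ B.det = 1 ∧ C.det = 1 ∧ r = vnorm (act3 A B C Wstate)} = 0 ∧
    ¬ ∃ A B C : Matrix (Fin 2) (Fin 2) ℂ,
        A.det = 1 ∧ B.det = 1 ∧ C.det = 1 ∧ vnorm (act3 A B C Wstate) = 0 := by
  have hnorm : ∀ t : ℝ, 0 < t →
      vnorm (act3 (Afilter t) (Afilter t) (Afilter t) Wstate) = Real.sqrt 3 / t := by
    intro t ht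
    rw [act3_diag t (ne_of_gt ht), vnorm_scaled t ht]
  have hdet : ∀ t : ℝ, t ≠ 0 → (Afilter t).det = 1 := by
    intro t ht
    have ht' : (t : ℂ) ≠ 0 := by exact_mod_cast ht
    simp [Afilter, Matrix.det_fin_two, Matrix.diagonal]
    field_simp
  refine ⟨hnorm, ?_, ?_⟩
  · set S := {r : ℝ | ∃ A B C : Matrix (Fin 2) (Fin 2) ℂ,
        A.det = 1 ∧ B.det = 1 ∧ C.det = 1 ∧ r = vnorm (act3 A B C Wstate)} with hS
    have hbdd : BddBelow S := by
      refine ⟨0, fun r hr => ?_⟩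
      obtain ⟨A, B, C, _, _, _, rfl⟩ := hr
      exact Real.sqrt_nonneg _
    have hmem : ∀ t : ℝ, 0 < t → Real.sqrt 3 / t ∈ S := by
      intro t ht
      exact ⟨Afilter t, Afilter t, Afilter t, hdet t (ne_of_gt ht), hdet t (ne_of_gt ht),
        hdet t (ne_of_gt ht), (hnorm t ht).symm⟩
    refine le_antisymm ?_ ?_
    · refine le_of_forall_pos_le_add fun ε hε => ?_
      have ht : (0 : ℝ) < Real.sqrt 3 / ε := by positivity
      have := csInf_le hbdd (hmem _ ht)
      have heq : Real.sqrt 3 / (Real.sqrt 3 / ε) = ε := by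
        field_simp
      rw [heq] at this
      linarith
    · refine le_csInf ⟨Real.sqrt 3 / 1, hmem 1 one_pos⟩ fun r hr => ?_
      obtain ⟨A, B, C, _, _, _, rfl⟩ := hr
      exact Real.sqrt_nonneg _
  · rintro ⟨A, B, C, hA, hB, hC, h⟩
    exact no_zero A B C hA hB hC h
end

section
/- If M is a linearly homogeneous function on unnormalized multipartite states invariant under determinant-1 local operations, then for invertible local operators A_i, M evaluated on the normalized filtered state equals M(ρ) · (Π_i |det(A_i)|^{2/N_i}) / Tr((⊗_i A_i)ρ(⊗_i A_i)†). In particular, among all determinant-1 local filterings, M of the normalized filtered state is maximized exactly by those (⊗_i A_i) minimizing Tr((⊗_i A_i)ρ(⊗_i A_i)†). -/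
open Matrix

/-- The local operator `⊗ᵢ Aᵢ` on `ℂ^{N₁} ⊗ ⋯ ⊗ ℂ^{N_p}`, given componentwise. -/
noncomputable def kron {p : ℕ} {N : Fin p → ℕ}
    (A : ∀ i, Matrix (Fin (N i)) (Fin (N i)) ℂ) :
    Matrix (∀ i, Fin (N i)) (∀ i, Fin (N i)) ℂ :=
  Matrix.of fun x y => ∏ i, A i (x i) (y i)

lemma kron_mul {p : ℕ} {N : Fin p → ℕ} (A B : ∀ i, Matrix (Fin (N i)) (Fin (N i)) ℂ) :
    kron A * kron B = kron (fun i => A i * B i) := by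
  ext x y
  simp only [kron, Matrix.mul_apply, Matrix.of_apply]
  rw [Finset.prod_univ_sum (fun _ => Finset.univ)
    (fun i j => A i (x i) j * B i j (y i))]
  rw [Fintype.piFinset_univ]
  exact Finset.sum_congr rfl fun z _ => (Finset.prod_mul_distrib).symm

lemma kron_conjTranspose {p : ℕ} {N : Fin p → ℕ}
    (A : ∀ i, Matrix (Fin (N i)) (Fin (N i)) ℂ) :
    (kron A)ᴴ = kron (fun i => (A i)ᴴ) := by
  ext x y
  simp only [kron, Matrix.conjTranspose_apply, Matrix.of_apply, star_prod]

lemma kron_one {p : ℕ} {N : Fin p → ℕ} :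
    kron (fun i => (1 : Matrix (Fin (N i)) (Fin (N i)) ℂ)) = 1 := by
  ext x y
  simp only [kron, Matrix.of_apply, Matrix.one_apply]
  rw [Finset.prod_boole]
  simp [funext_iff]

lemma kron_smul {p : ℕ} {N : Fin p → ℕ} (c : Fin p → ℂ)
    (A : ∀ i, Matrix (Fin (N i)) (Fin (N i)) ℂ) :
    kron (fun i => c i • A i) = (∏ i, c i) • kron A := by
  ext x y
  simp only [kron, Matrix.of_apply, Matrix.smul_apply, smul_eq_mul]
  rw [← Finset.prod_mul_distrib]

lemma filter_pure {n : Type*} [Fintype n] (K : Matrix n n ℂ) (ψ : n → ℂ) :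
    K * Matrix.vecMulVec ψ (star ψ) * Kᴴ
      = Matrix.vecMulVec (K *ᵥ ψ) (star (K *ᵥ ψ)) := by
  ext i j
  simp only [Matrix.mul_apply, Matrix.vecMulVec_apply, Matrix.conjTranspose_apply,
    Matrix.mulVec, dotProduct, Pi.star_apply, star_sum, star_mul']
  rw [Finset.mul_sum]
  refine Finset.sum_congr rfl fun l _ => ?_
  rw [Finset.sum_mul, Finset.sum_mul]
  refine Finset.sum_congr rfl fun k _ => ?_
  ring

lemma trace_vecMulVec_re {n : Type*} [Fintype n] (v : n → ℂ) :
    (Matrix.vecMulVec v (star v)).trace.re = ∑ i, Complex.normSq (v i) := by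
  have h : (Matrix.vecMulVec v (star v)).trace
      = ((∑ i, Complex.normSq (v i) : ℝ) : ℂ) := by
    simp [Matrix.trace, Matrix.diag, Matrix.vecMulVec_apply, Complex.mul_conj]
  rw [h, Complex.ofReal_re]

lemma trace_filter_pos {p : ℕ} {N : Fin p → ℕ}
    (ψ : (∀ i, Fin (N i)) → ℂ) (hψ : ψ ≠ 0)
    (A : ∀ i, Matrix (Fin (N i)) (Fin (N i)) ℂ) (hA : ∀ i, IsUnit (A i).det) :
    0 < (kron A * Matrix.vecMulVec ψ (star ψ) * (kron A)ᴴ).trace.re := by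
  rw [filter_pure, trace_vecMulVec_re]
  have h1 : kron (fun i => (A i)⁻¹) * kron A = 1 := by
    rw [kron_mul,
      show (fun i => (A i)⁻¹ * A i) = fun i => (1 : Matrix (Fin (N i)) (Fin (N i)) ℂ) from
        funext fun i => Matrix.nonsing_inv_mul _ (hA i)]
    exact kron_one
  have hv : kron A *ᵥ ψ ≠ 0 := by
    intro h0
    apply hψ
    have : ψ = kron (fun i => (A i)⁻¹) *ᵥ (kron A *ᵥ ψ) := by
      rw [Matrix.mulVec_mulVec, h1, Matrix.one_mulVec]
    rw [this, h0, Matrix.mulVec_zero]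
  obtain ⟨i, hi⟩ := Function.ne_iff.mp hv
  exact Finset.sum_pos' (fun j _ => Complex.normSq_nonneg _)
    ⟨i, Finset.mem_univ i, Complex.normSq_pos.mpr hi⟩

/-- if `M` is linearly homogeneous and invariant under determinant-1
local operations, then for invertible local operators `Aᵢ`,
`M(filtered/Tr filtered) = M(ρ) ⬝ ∏ᵢ |det Aᵢ|^{2/Nᵢ} / Tr(filtered)`; in particular,
among determinant-1 local filterings, `M` of the normalized filtered state is
maximized exactly by those minimizing `Tr((⊗Aᵢ)ρ(⊗Aᵢ)†)`. -/
theorem optimal_filtering (p : ℕ) (N : Fin p → ℕ) (hN : ∀ i, 0 < N i)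
    (ψ : (∀ i, Fin (N i)) → ℂ) (hψ : ψ ≠ 0)
    (ρ : Matrix (∀ i, Fin (N i)) (∀ i, Fin (N i)) ℂ)
    (hρ : ρ = Matrix.vecMulVec ψ (star ψ))
    (M : Matrix (∀ i, Fin (N i)) (∀ i, Fin (N i)) ℂ → ℝ)
    (hhom : ∀ (c : ℝ), 0 ≤ c → ∀ σ, M ((c : ℂ) • σ) = c * M σ)
    (hinv : ∀ B : ∀ i, Matrix (Fin (N i)) (Fin (N i)) ℂ,
      (∀ i, (B i).det = 1) → ∀ σ, M (kron B * σ * (kron B)ᴴ) = M σ)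
    (hM : 0 < M ρ) :
    (∀ A : ∀ i, Matrix (Fin (N i)) (Fin (N i)) ℂ, (∀ i, IsUnit (A i).det) →
      M ((((kron A * ρ * (kron A)ᴴ).trace.re : ℝ) : ℂ)⁻¹ • (kron A * ρ * (kron A)ᴴ))
        = M ρ * (∏ i, ‖(A i).det‖ ^ ((2 : ℝ) / (N i)))
            / (kron A * ρ * (kron A)ᴴ).trace.re) ∧
    (∀ A : ∀ i, Matrix (Fin (N i)) (Fin (N i)) ℂ, (∀ i, (A i).det = 1) →
      ((∀ B : ∀ i, Matrix (Fin (N i)) (Fin (N i)) ℂ, (∀ i, (B i).det = 1) →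
          M ((((kron B * ρ * (kron B)ᴴ).trace.re : ℝ) : ℂ)⁻¹ • (kron B * ρ * (kron B)ᴴ))
            ≤ M ((((kron A * ρ * (kron A)ᴴ).trace.re : ℝ) : ℂ)⁻¹ • (kron A * ρ * (kron A)ᴴ)))
        ↔ (∀ B : ∀ i, Matrix (Fin (N i)) (Fin (N i)) ℂ, (∀ i, (B i).det = 1) →
          (kron A * ρ * (kron A)ᴴ).trace.re ≤ (kron B * ρ * (kron B)ᴴ).trace.re))) := by
  have key : ∀ A : ∀ i, Matrix (Fin (N i)) (Fin (N i)) ℂ, (∀ i, IsUnit (A i).det) →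
      M ((((kron A * ρ * (kron A)ᴴ).trace.re : ℝ) : ℂ)⁻¹ • (kron A * ρ * (kron A)ᴴ))
        = M ρ * (∏ i, ‖(A i).det‖ ^ ((2 : ℝ) / (N i)))
            / (kron A * ρ * (kron A)ᴴ).trace.re := by
    intro A hA
    set c : Fin p → ℂ := fun i => (A i).det ^ ((N i : ℂ)⁻¹) with hc
    have hcpow : ∀ i, c i ^ (N i) = (A i).det :=
      fun i => Complex.cpow_nat_inv_pow _ (hN i).ne'
    have hcne : ∀ i, c i ≠ 0 := by
      intro i h0
      apply (hA i).ne_zero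
      rw [← hcpow i, h0, zero_pow (hN i).ne']
    set B : ∀ i, Matrix (Fin (N i)) (Fin (N i)) ℂ := fun i => (c i)⁻¹ • A i with hB
    have hBdet : ∀ i, (B i).det = 1 := by
      intro i
      rw [hB]
      simp only [Matrix.det_smul, Fintype.card_fin]
      rw [inv_pow, hcpow i, inv_mul_cancel₀ (hA i).ne_zero]
    have hAB : A = fun i => c i • B i := by
      funext i
      rw [hB, smul_smul, mul_inv_cancel₀ (hcne i), one_smul]
    have hkron : kron A = (∏ i, c i) • kron B := by
      rw [hAB]; exact kron_smul c B
    set d : ℂ := ∏ i, c i with hd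
    set Y : Matrix (∀ i, Fin (N i)) (∀ i, Fin (N i)) ℂ := kron B * ρ * (kron B)ᴴ with hY
    set r : ℝ := ∏ i, ‖(A i).det‖ ^ ((2 : ℝ) / (N i)) with hr
    have hr0 : 0 ≤ r := Finset.prod_nonneg fun i _ =>
      Real.rpow_nonneg (norm_nonneg _) _
    have hnorm : Complex.normSq d = r := by
      rw [Complex.normSq_eq_norm_sq, hd, Complex.norm_prod, ← Finset.prod_pow, hr]
      refine Finset.prod_congr rfl fun i _ => ?_
      rw [hc]
      simp only []
      rw [Complex.norm_cpow_inv_nat,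
        ← Real.rpow_natCast (‖(A i).det‖ ^ ((N i : ℝ)⁻¹)) 2,
        ← Real.rpow_mul (norm_nonneg _)]
      norm_num
      rw [inv_mul_eq_div]
    have hX : kron A * ρ * (kron A)ᴴ = ((r : ℝ) : ℂ) • Y := by
      rw [hkron, Matrix.conjTranspose_smul, Matrix.smul_mul, Matrix.smul_mul,
        Matrix.mul_smul, smul_smul]
      congr 1
      rw [Complex.star_def, Complex.mul_conj, hnorm]
    have hMY : M Y = M ρ := hinv B hBdet ρ
    have htY : 0 < Y.trace.re := by
      rw [hY, hρ]
      exact trace_filter_pos ψ hψ B (fun i => by rw [hBdet i]; exact isUnit_one)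
    rw [hX]
    have htr2 : (((r : ℝ) : ℂ) • Y).trace.re = r * Y.trace.re := by
      rw [Matrix.trace_smul, smul_eq_mul, Complex.re_ofReal_mul]
    rw [htr2]
    have hsc : ((((r * Y.trace.re : ℝ)) : ℂ))⁻¹ • (((r : ℝ) : ℂ) • Y)
        = ((((r * Y.trace.re)⁻¹ * r : ℝ)) : ℂ) • Y := by
      rw [smul_smul]
      congr 1
      push_cast
      ring
    rw [hsc, hhom _ (mul_nonneg (inv_nonneg.2 (mul_nonneg hr0 htY.le)) hr0) Y, hMY]
    rw [div_eq_mul_inv]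
    ring
  refine ⟨key, ?_⟩
  intro A hA
  have hAU : ∀ i, IsUnit (A i).det := fun i => by rw [hA i]; exact isUnit_one
  have hrA : (∏ i, ‖(A i).det‖ ^ ((2 : ℝ) / (N i))) = 1 := by
    apply Finset.prod_eq_one
    intro i _
    rw [hA i]; simp [Real.one_rpow]
  have htA : 0 < (kron A * ρ * (kron A)ᴴ).trace.re := by
    rw [hρ]; exact trace_filter_pos ψ hψ A hAU
  constructor
  · intro h B hB
    have hBU : ∀ i, IsUnit (B i).det := fun i => by rw [hB i]; exact isUnit_one
    have hrB : (∏ i, ‖(B i).det‖ ^ ((2 : ℝ) / (N i))) = 1 := by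
      apply Finset.prod_eq_one
      intro i _
      rw [hB i]
      simp [Real.one_rpow]
    have htB : 0 < (kron B * ρ * (kron B)ᴴ).trace.re := by
      rw [hρ]; exact trace_filter_pos ψ hψ B hBU
    have h2 := h B hB
    rw [key A hAU, key B hBU, hrA, hrB, mul_one] at h2
    exact (div_le_div_iff_of_pos_left hM htB htA).mp h2
  · intro h B hB
    have hBU : ∀ i, IsUnit (B i).det := fun i => by rw [hB i]; exact isUnit_one
    have hrB : (∏ i, ‖(B i).det‖ ^ ((2 : ℝ) / (N i))) = 1 := by
      apply Finset.prod_eq_one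
      intro i _
      rw [hB i]
      simp [Real.one_rpow]
    have htB : 0 < (kron B * ρ * (kron B)ᴴ).trace.re := by
      rw [hρ]; exact trace_filter_pos ψ hψ B hBU
    rw [key A hAU, key B hBU, hrA, hrB, mul_one]
    exact (div_le_div_iff_of_pos_left hM htB htA).mpr (h B hB)
end
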